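/- (Maximal Hardy–Littlewood inequality) For every integrable function f ∈ L¹(ℝⁿ) and every real c > 0, λₙ({x ∈ ℝⁿ : Mf(x) ≥ c}) ≤ 3ⁿ ‖f‖₁ / c. -/

import Mathlib

open Filter Topology MeasureTheory
open scoped ENNReal NNReal

noncomputable section

/-- The Hardy–Littlewood maximal function
`Mf(x) = sup_{r>0} (1/λₙ(B(x,r))) ∫_{B(x,r)} |f| dλₙ`, valued in `ℝ≥0∞`. -/
def maximalFn {n : ℕ} (f : EuclideanSpace ℝ (Fin n) → ℝ)
    (x : EuclideanSpace ℝ (Fin n)) : ℝ≥0∞ :=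
  ⨆ (r : ℝ) (_ : 0 < r),
    (∫⁻ t in Metric.ball x r, ‖f t‖₊ ∂volume) / volume (Metric.ball x r)

/-- **Maximal Hardy–Littlewood inequality.**
For every integrable `f ∈ L¹(ℝⁿ)` and every real `c > 0`,
`λₙ({x : Mf(x) ≥ c}) ≤ 3ⁿ ‖f‖₁ / c`. -/
theorem stmt_6 (n : ℕ) (f : EuclideanSpace ℝ (Fin n) → ℝ)
    (hf : Integrable f (volume : Measure (EuclideanSpace ℝ (Fin n))))
    (c : ℝ) (hc : 0 < c) :
    volume {x : EuclideanSpace ℝ (Fin n) | ENNReal.ofReal c ≤ maximalFn f x}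
      ≤ (3 : ℝ≥0∞) ^ n * (∫⁻ x, ‖f x‖₊ ∂volume) / ENNReal.ofReal c := by
  classical
  have hI_ne : (∫⁻ x, ‖f x‖₊ ∂(volume : Measure (EuclideanSpace ℝ (Fin n)))) ≠ ∞ := hf.2.ne
  have hc0 : ENNReal.ofReal c ≠ 0 := (ENNReal.ofReal_pos.2 hc).ne'
  rcases Nat.eq_zero_or_pos n with hn | hn
  · -- dimension 0 : the space is a single point of measure 1
    subst hn
    have huniv : volume (Set.univ : Set (EuclideanSpace ℝ (Fin 0))) = 1 := by
      rw [← ((EuclideanSpace.volume_preserving_symm_measurableEquiv_toLp (Fin 0)).symm).measure_preimage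
        MeasurableSet.univ.nullMeasurableSet]
      show (volume (Set.univ : Set (Fin 0 → ℝ))) = 1
      rw [show (volume : Measure (Fin 0 → ℝ)) = Measure.pi fun _ => volume from rfl,
        Measure.pi_univ]
      simp
    rcases ({x : EuclideanSpace ℝ (Fin 0) |
        ENNReal.ofReal c ≤ maximalFn f x}).eq_empty_or_nonempty with he | ⟨x₀, hx₀⟩
    · rw [he]; simp
    · have hball : ∀ r : ℝ, 0 < r → Metric.ball x₀ r = Set.univ := by
        intro r hr
        apply Set.eq_univ_of_forall
        intro y
        have : y = x₀ := Subsingleton.elim _ _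
        simp [this, Metric.mem_ball, hr]
      have hmax : maximalFn f x₀ = ∫⁻ x, ‖f x‖₊ ∂volume := by
        apply le_antisymm
        · refine iSup_le fun r => iSup_le fun hr => ?_
          rw [hball r hr, huniv]
          simp [Measure.restrict_univ]
        · have := le_iSup (fun r : ℝ => ⨆ (_ : 0 < r),
              (∫⁻ t in Metric.ball x₀ r, ‖f t‖₊ ∂volume) / volume (Metric.ball x₀ r)) 1
          refine le_trans ?_ this
          rw [iSup_pos one_pos, hball 1 one_pos, huniv]
          simp [Measure.restrict_univ]
      have hcI : ENNReal.ofReal c ≤ ∫⁻ x, ‖f x‖₊ ∂volume := by rw [← hmax]; exact hx₀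
      calc volume {x : EuclideanSpace ℝ (Fin 0) | ENNReal.ofReal c ≤ maximalFn f x}
          ≤ volume (Set.univ : Set (EuclideanSpace ℝ (Fin 0))) :=
            measure_mono (Set.subset_univ _)
        _ = 1 := huniv
        _ ≤ (∫⁻ x, ‖f x‖₊ ∂volume) / ENNReal.ofReal c := by
            rw [ENNReal.le_div_iff_mul_le (Or.inl hc0) (Or.inl ENNReal.ofReal_ne_top), one_mul]
            exact hcI
        _ = (3 : ℝ≥0∞) ^ 0 * (∫⁻ x, ‖f x‖₊ ∂volume) / ENNReal.ofReal c := by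
            rw [pow_zero, one_mul]
  · -- positive dimension
    haveI : Nonempty (Fin n) := ⟨⟨0, hn⟩⟩
    haveI : Nontrivial (EuclideanSpace ℝ (Fin n)) := by infer_instance
    have hb1 : volume (Metric.ball (0 : EuclideanSpace ℝ (Fin n)) 1) ≠ 0 :=
      (Metric.measure_ball_pos _ _ one_pos).ne'
    have hb1t : volume (Metric.ball (0 : EuclideanSpace ℝ (Fin n)) 1) ≠ ∞ :=
      measure_ball_lt_top.ne
    have key : ∀ c' : ℝ, 0 < c' → c' < c → ∀ τ : ℝ, 3 < τ →
        volume {x : EuclideanSpace ℝ (Fin n) | ENNReal.ofReal c ≤ maximalFn f x}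
          ≤ ENNReal.ofReal τ ^ n * (∫⁻ x, ‖f x‖₊ ∂volume) / ENNReal.ofReal c' := by
      intro c' hc'0 hc'c τ hτ
      have hc'ne : ENNReal.ofReal c' ≠ 0 := (ENNReal.ofReal_pos.2 hc'0).ne'
      set s : Set (EuclideanSpace ℝ (Fin n)) :=
        {x : EuclideanSpace ℝ (Fin n) | ENNReal.ofReal c ≤ maximalFn f x} with hsdef
      set C : ℝ≥0∞ := (∫⁻ x, ‖f x‖₊ ∂volume) / ENNReal.ofReal c'
        / volume (Metric.ball (0 : EuclideanSpace ℝ (Fin n)) 1) with hCdef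
      have hC : C ≠ ∞ :=
        (ENNReal.div_lt_top (ENNReal.div_lt_top hI_ne hc'ne).ne hb1).ne
      set R : ℝ := max 1 C.toReal with hRdef
      have choice : ∀ x ∈ s, ∃ r : ℝ, 0 < r ∧ r ≤ R ∧
          volume (Metric.ball x r) ≤
            (∫⁻ t in Metric.ball x r, ‖f t‖₊ ∂volume) / ENNReal.ofReal c' := by
        intro x hx
        have h1 : ENNReal.ofReal c' < maximalFn f x :=
          lt_of_lt_of_le ((ENNReal.ofReal_lt_ofReal_iff hc).2 hc'c) hx
        rw [maximalFn, lt_iSup_iff] at h1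
        obtain ⟨r, h1⟩ := h1
        rw [lt_iSup_iff] at h1
        obtain ⟨hr, h1⟩ := h1
        have hvol0 : volume (Metric.ball x r) ≠ 0 := (Metric.measure_ball_pos _ _ hr).ne'
        have hvolt : volume (Metric.ball x r) ≠ ∞ := measure_ball_lt_top.ne
        have h2 : volume (Metric.ball x r) ≤
            (∫⁻ t in Metric.ball x r, ‖f t‖₊ ∂volume) / ENNReal.ofReal c' := by
          rw [ENNReal.le_div_iff_mul_le (Or.inl hc'ne) (Or.inl ENNReal.ofReal_ne_top)]
          rw [mul_comm]
          rw [← ENNReal.le_div_iff_mul_le (Or.inl hvol0) (Or.inl hvolt)]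
          exact h1.le
        refine ⟨r, hr, ?_, h2⟩
        have h3 : volume (Metric.ball x r) ≤ (∫⁻ x, ‖f x‖₊ ∂volume) / ENNReal.ofReal c' := by
          refine h2.trans ?_
          gcongr
          exact Measure.restrict_le_self
        have h4 : ENNReal.ofReal (r ^ n) ≤ C := by
          rw [hCdef, ENNReal.le_div_iff_mul_le (Or.inl hb1) (Or.inl hb1t)]
          calc ENNReal.ofReal (r ^ n) * volume (Metric.ball (0 : EuclideanSpace ℝ (Fin n)) 1)
              = volume (Metric.ball x r) := by
                rw [Measure.addHaar_ball volume x hr.le, finrank_euclideanSpace_fin]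
            _ ≤ (∫⁻ x, ‖f x‖₊ ∂volume) / ENNReal.ofReal c' := h3
        have h5 : r ^ n ≤ C.toReal := (ENNReal.ofReal_le_iff_le_toReal hC).1 h4
        rcases le_or_gt r 1 with h | h
        · exact h.trans (le_max_left _ _)
        · have : r ≤ r ^ n := le_self_pow₀ h.le hn.ne'
          exact (this.trans h5).trans (le_max_right _ _)
      choose! ρ hρ0 hρR hρvol using choice
      obtain ⟨u, hu_sub, hu_disj, hu_cov⟩ :=
        Vitali.exists_disjoint_subfamily_covering_enlargement_closedBall s (fun a => a) ρ R
          (fun a ha => hρR a ha) τ hτ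
      -- countability of u
      have hdisj' : Pairwise (Function.onFun Disjoint fun b : u =>
          Metric.closedBall (b : EuclideanSpace ℝ (Fin n)) (ρ b)) := by
        intro i j hij
        exact hu_disj i.2 j.2 (Subtype.coe_injective.ne hij)
      have hu_cnt : u.Countable := by
        have h := Measure.countable_meas_pos_of_disjoint_iUnion
          (μ := (volume : Measure (EuclideanSpace ℝ (Fin n))))
          (As := fun b : u => Metric.closedBall (b : EuclideanSpace ℝ (Fin n)) (ρ b))
          (fun b => measurableSet_closedBall) hdisj'
        have huniv : {i : u |
            0 < volume (Metric.closedBall (i : EuclideanSpace ℝ (Fin n)) (ρ i))} = Set.univ := by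
          apply Set.eq_univ_of_forall
          intro b
          exact Metric.measure_closedBall_pos _ _ (hρ0 b (hu_sub b.2))
        rw [huniv] at h
        exact Set.countable_coe_iff.1 (Set.countable_univ_iff.1 h)
      haveI : Countable u := hu_cnt.to_subtype
      have hball_disj : Pairwise (Function.onFun Disjoint fun b : u =>
          Metric.ball (b : EuclideanSpace ℝ (Fin n)) (ρ b)) := by
        intro i j hij
        exact (hdisj' hij).mono Metric.ball_subset_closedBall Metric.ball_subset_closedBall
      have step_cover : volume s ≤ ∑' b : u,
          volume (Metric.closedBall (b : EuclideanSpace ℝ (Fin n)) (τ * ρ b)) := by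
        refine le_trans (measure_mono ?_)
          (measure_biUnion_le volume hu_cnt fun b => Metric.closedBall b (τ * ρ b))
        intro x hx
        obtain ⟨b, hb, hsub⟩ := hu_cov x hx
        exact Set.mem_biUnion hb (hsub (Metric.mem_closedBall_self (hρ0 x hx).le))
      have hterm : ∀ b : u, volume (Metric.closedBall (b : EuclideanSpace ℝ (Fin n)) (τ * ρ b)) =
          ENNReal.ofReal τ ^ n * volume (Metric.ball (b : EuclideanSpace ℝ (Fin n)) (ρ b)) := by
        intro b
        have hρb : 0 < ρ b := hρ0 b (hu_sub b.2)
        have hτ0 : (0:ℝ) ≤ τ := by linarith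
        calc volume (Metric.closedBall (b : EuclideanSpace ℝ (Fin n)) (τ * ρ b))
            = ENNReal.ofReal (τ ^ n)
                * volume (Metric.closedBall (0 : EuclideanSpace ℝ (Fin n)) (ρ b)) := by
              rw [Measure.addHaar_closedBall_mul volume _ hτ0 hρb.le,
                finrank_euclideanSpace_fin]
          _ = ENNReal.ofReal τ ^ n
                * volume (Metric.ball (b : EuclideanSpace ℝ (Fin n)) (ρ b)) := by
              rw [Measure.addHaar_closedBall_eq_addHaar_ball,
                Measure.addHaar_ball_center volume (b : EuclideanSpace ℝ (Fin n)),
                ENNReal.ofReal_pow hτ0]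
      calc volume s
          ≤ ∑' b : u, volume (Metric.closedBall (b : EuclideanSpace ℝ (Fin n)) (τ * ρ b)) :=
            step_cover
        _ = ∑' b : u, ENNReal.ofReal τ ^ n
              * volume (Metric.ball (b : EuclideanSpace ℝ (Fin n)) (ρ b)) := by
            simp only [hterm]
        _ ≤ ∑' b : u, ENNReal.ofReal τ ^ n *
              ((∫⁻ t in Metric.ball (b : EuclideanSpace ℝ (Fin n)) (ρ b), ‖f t‖₊ ∂volume)
                / ENNReal.ofReal c') := by
            gcongr with b
            exact hρvol b (hu_sub b.2)
        _ = ENNReal.ofReal τ ^ n *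
              (∑' b : u, ∫⁻ t in Metric.ball (b : EuclideanSpace ℝ (Fin n)) (ρ b), ‖f t‖₊ ∂volume)
                / ENNReal.ofReal c' := by
            simp only [div_eq_mul_inv, mul_assoc, ENNReal.tsum_mul_left, ENNReal.tsum_mul_right]
        _ ≤ ENNReal.ofReal τ ^ n * (∫⁻ x, ‖f x‖₊ ∂volume) / ENNReal.ofReal c' := by
            gcongr
            rw [← lintegral_iUnion (fun b : u => measurableSet_ball) hball_disj]
            exact setLIntegral_le_lintegral _ _
    have step1 : ∀ c' : ℝ, 0 < c' → c' < c →
        volume {x : EuclideanSpace ℝ (Fin n) | ENNReal.ofReal c ≤ maximalFn f x}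
          ≤ (3 : ℝ≥0∞) ^ n * (∫⁻ x, ‖f x‖₊ ∂volume) / ENNReal.ofReal c' := by
      intro c' h0 h1
      have hKne : (∫⁻ x, ‖f x‖₊ ∂volume) / ENNReal.ofReal c' ≠ ∞ :=
        (ENNReal.div_lt_top hI_ne (ENNReal.ofReal_pos.2 h0).ne').ne
      have h3 : ENNReal.ofReal (3:ℝ) = 3 := by
        rw [ENNReal.ofReal]
        norm_num
      have tend : Tendsto (fun τ : ℝ =>
            ENNReal.ofReal τ ^ n * (∫⁻ x, ‖f x‖₊ ∂volume) / ENNReal.ofReal c')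
          (𝓝[>] (3:ℝ))
          (𝓝 ((3 : ℝ≥0∞) ^ n * (∫⁻ x, ‖f x‖₊ ∂volume) / ENNReal.ofReal c')) := by
        have t1 : Tendsto (fun τ : ℝ => ENNReal.ofReal τ ^ n) (𝓝[>] (3:ℝ))
            (𝓝 ((3 : ℝ≥0∞) ^ n)) := by
          rw [← h3]
          exact ((ENNReal.continuous_pow n).tendsto _).comp
            ((ENNReal.continuous_ofReal.tendsto 3).comp (tendsto_id'.2 nhdsWithin_le_nhds))
        have := ENNReal.Tendsto.mul_const t1 (Or.inr hKne)
        simpa only [mul_div_assoc] using this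
      refine ge_of_tendsto tend ?_
      filter_upwards [self_mem_nhdsWithin] with τ hτ using key c' h0 h1 τ hτ
    have tend2 : Tendsto (fun c' : ℝ =>
          (3 : ℝ≥0∞) ^ n * (∫⁻ x, ‖f x‖₊ ∂volume) / ENNReal.ofReal c')
        (𝓝[Set.Ioo 0 c] c)
        (𝓝 ((3 : ℝ≥0∞) ^ n * (∫⁻ x, ‖f x‖₊ ∂volume) / ENNReal.ofReal c)) := by
      have hKne : (3 : ℝ≥0∞) ^ n * (∫⁻ x, ‖f x‖₊ ∂volume) ≠ ∞ :=
        ENNReal.mul_ne_top (by simp) hI_ne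
      have t1 : Tendsto (fun c' : ℝ => (ENNReal.ofReal c')⁻¹) (𝓝[Set.Ioo 0 c] c)
          (𝓝 (ENNReal.ofReal c)⁻¹) :=
        (continuous_inv.tendsto _).comp
          ((ENNReal.continuous_ofReal.tendsto c).comp (tendsto_id'.2 nhdsWithin_le_nhds))
      have := ENNReal.Tendsto.const_mul t1 (Or.inr hKne)
      simpa only [div_eq_mul_inv] using this
    haveI : (𝓝[Set.Ioo (0:ℝ) c] c).NeBot := right_nhdsWithin_Ioo_neBot hc
    refine ge_of_tendsto tend2 ?_
    filter_upwards [self_mem_nhdsWithin] with c' hc' using step1 c' hc'.1 hc'.2
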